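/- Let v be a vertex of a graph G whose closed neighborhood N[v] is contained in the closed neighborhood N[u] of a neighbor u of v (u is 'dominated' by v). Then there exists a maximum independent set of G not containing u. -/

import Mathlib

variable {V : Type*} [Fintype V] [DecidableEq V]

def IsIndep (G : SimpleGraph V) (I : Finset V) : Prop :=
  ∀ u ∈ I, ∀ v ∈ I, ¬ G.Adj u v

def IsMaxIndep (G : SimpleGraph V) (I : Finset V) : Prop :=
  IsIndep G I ∧ ∀ J : Finset V, IsIndep G J → J.card ≤ I.card

theorem domination_reduction (G : SimpleGraph V) [DecidableRel G.Adj] (u v : V)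
    (huv : G.Adj u v)
    (hdom : insert v (G.neighborFinset v) ⊆ insert u (G.neighborFinset u)) :
    ∃ I : Finset V, IsMaxIndep G I ∧ u ∉ I := by
  classical
  -- get a maximum independent set
  obtain ⟨I, hIindep, hImax⟩ : ∃ I : Finset V, IsIndep G I ∧
      ∀ J : Finset V, IsIndep G J → J.card ≤ I.card := by
    have hne : (Finset.univ.powerset.filter (fun S => IsIndep G S)).Nonempty := by
      refine ⟨∅, ?_⟩
      simp [IsIndep]
    obtain ⟨I, hI, hmax⟩ := Finset.exists_max_image _ Finset.card hne
    simp only [Finset.mem_filter] at hI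
    refine ⟨I, hI.2, fun J hJ => ?_⟩
    exact hmax J (by simp [hJ])
  by_cases hu : u ∈ I
  · -- replace u by v
    have hvI : v ∉ I := fun hv => hIindep u hu v hv huv
    refine ⟨insert v (I.erase u), ⟨?_, ?_⟩, ?_⟩
    · intro a ha b hb hab
      have key : ∀ w ∈ I.erase u, ¬ G.Adj v w := by
        intro w hw hadj
        have hwmem : w ∈ insert u (G.neighborFinset u) := by
          apply hdom
          simp [SimpleGraph.mem_neighborFinset, hadj]
        rcases Finset.mem_insert.mp hwmem with h | h
        · exact (Finset.mem_erase.mp hw).1 h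
        · exact hIindep u hu w (Finset.mem_of_mem_erase hw)
            (SimpleGraph.mem_neighborFinset _ _ _ |>.mp h)
      rcases Finset.mem_insert.mp ha with ha' | ha
      · subst ha'
        rcases Finset.mem_insert.mp hb with hb' | hb
        · subst hb'; exact G.loopless.irrefl _ hab
        · exact key b hb hab
      · rcases Finset.mem_insert.mp hb with hb' | hb
        · have h2 := hab.symm
          rw [hb'] at h2
          exact key a ha h2
        · exact hIindep a (Finset.mem_of_mem_erase ha) b (Finset.mem_of_mem_erase hb) hab
    · intro J hJ
      have : (insert v (I.erase u)).card = I.card := by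
        rw [Finset.card_insert_of_notMem (fun h => hvI (Finset.mem_of_mem_erase h)),
          Finset.card_erase_of_mem hu]
        have := Finset.card_pos.mpr ⟨u, hu⟩
        omega
      rw [this]
      exact hImax J hJ
    · intro h
      rcases Finset.mem_insert.mp h with h | h
      · exact G.loopless.irrefl u (h ▸ huv)
      · exact (Finset.mem_erase.mp h).1 rfl
  · exact ⟨I, ⟨hIindep, hImax⟩, hu⟩
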